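/- Let k ≥ 3 and n = k^s·t with s ≥ 1, t ≥ 2 and k not dividing t, and let x ∈ {0,1,...,kn−2} satisfy 1 ≤ T(x) ≤ s. Then there exists y in the orbit of x under the group H such that either T(y) = 0, or the base-k digits of ⌊y/t⌋ satisfy y_0 = 0 and y_1 = k−1 and T(y) ≤ T(x). -/

import Mathlib

/-- The standard shuffle `σ` on a deck of `k * n` cards whose positions are labelled by
`Fin (k * n)`: it sends position `i + j * n` (for `i ∈ {0,…,n-1}`, `j ∈ {0,…,k-1}`)
to position `i * k + j`. -/
def stdShuffle (k n : ℕ) : Equiv.Perm (Fin (k * n)) :=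
  finProdFinEquiv.symm.trans ((Equiv.prodComm (Fin k) (Fin n)).trans
    (finProdFinEquiv.trans (finCongr (Nat.mul_comm n k))))

/-- The permutation `ρ_τ` of the `k * n` cards induced by a permutation `τ` of the `k`
piles: it sends position `i + j * n` (for `i ∈ {0,…,n-1}`, `j ∈ {0,…,k-1}`) to
position `i + τ(j) * n`. -/
def pilePerm (k n : ℕ) (τ : Equiv.Perm (Fin k)) : Equiv.Perm (Fin (k * n)) :=
  finProdFinEquiv.symm.trans ((Equiv.prodCongr τ (Equiv.refl (Fin n))).trans finProdFinEquiv)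

/-- The shuffle group `G_{k,kn}`, the subgroup of `Sym({0,…,kn-1})` generated by `σ`
together with all `ρ_τ` (equivalently, by all products `ρ_τ · σ`). -/
def shuffleGroup (k n : ℕ) : Subgroup (Equiv.Perm (Fin (k * n))) :=
  Subgroup.closure ({stdShuffle k n} ∪ Set.range (pilePerm k n))

/-- The subgroup `H` of `Sym({0,…,kn-1})` generated by `σ` together with all `ρ_τ` for
permutations `τ` of the `k` piles fixing the last pile `k - 1`. -/
def stabSubgroup (k n : ℕ) : Subgroup (Equiv.Perm (Fin (k * n))) :=
  Subgroup.closure ({stdShuffle k n} ∪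
    {g | ∃ τ : Equiv.Perm (Fin k),
      (∀ h : k - 1 < k, τ ⟨k - 1, h⟩ = ⟨k - 1, h⟩) ∧ g = pilePerm k n τ})

/-- `Tcount k t s x` is `T(x)`: the number of indices `i ∈ {0,…,s}` such that the
`i`-th base-`k` digit of `⌊x/t⌋` equals `k - 1`. -/
def Tcount (k t s x : ℕ) : ℕ :=
  ((Finset.range (s + 1)).filter fun i => x / t / k ^ i % k = k - 1).card

namespace ShuffleLemma

/-- digit `i` of `⌊x/t⌋` in base `k` -/
def dgt (k t i x : ℕ) : ℕ := x / t / k ^ i % k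

lemma Tcount_eq_sum (k t s x : ℕ) :
    Tcount k t s x = ∑ i ∈ Finset.range (s+1), if dgt k t i x = k - 1 then 1 else 0 := by
  rw [Tcount, Finset.card_filter]
  rfl

section vals

variable {k n : ℕ}

lemma stdShuffle_val (x : Fin (k*n)) :
    ((stdShuffle k n x : Fin (k*n)) : ℕ) = (x:ℕ)/n + k * ((x:ℕ)%n) := by
  simp [stdShuffle, finProdFinEquiv, Fin.divNat, Fin.modNat]

lemma stdShuffle_inv_val (x : Fin (k*n)) :
    (((stdShuffle k n)⁻¹ x : Fin (k*n)) : ℕ) = (x:ℕ)/k + n * ((x:ℕ)%k) := by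
  simp [stdShuffle, Equiv.Perm.inv_def, finProdFinEquiv, Fin.divNat, Fin.modNat,
    Equiv.symm_trans_apply, finCongr]

lemma pilePerm_val (τ : Equiv.Perm (Fin k)) (x : Fin (k*n)) :
    ((pilePerm k n τ x : Fin (k*n)) : ℕ) = (x:ℕ)%n + n * (τ (Fin.divNat x) : ℕ) := by
  simp [pilePerm, finProdFinEquiv, Fin.modNat]

lemma stdShuffle_mem : stdShuffle k n ∈ stabSubgroup k n :=
  Subgroup.subset_closure (Or.inl rfl)

lemma pilePerm_mem {τ : Equiv.Perm (Fin k)}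
    (hτ : ∀ h : k - 1 < k, τ ⟨k - 1, h⟩ = ⟨k - 1, h⟩) :
    pilePerm k n τ ∈ stabSubgroup k n :=
  Subgroup.subset_closure (Or.inr ⟨τ, hτ, rfl⟩)

/-- reachability under the subgroup -/
def Rch (k n : ℕ) (x y : Fin (k*n)) : Prop := ∃ g ∈ stabSubgroup k n, g x = y

lemma Rch.refl (x : Fin (k*n)) : Rch k n x x := ⟨1, one_mem _, rfl⟩

lemma Rch.trans {x y z : Fin (k*n)} (h1 : Rch k n x y) (h2 : Rch k n y z) :
    Rch k n x z := by
  obtain ⟨g1, hg1, e1⟩ := h1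
  obtain ⟨g2, hg2, e2⟩ := h2
  exact ⟨g2 * g1, mul_mem hg2 hg1, by simp [Equiv.Perm.mul_apply, e1, e2]⟩

lemma Rch.shuffle_inv (x : Fin (k*n)) : Rch k n x ((stdShuffle k n)⁻¹ x) :=
  ⟨(stdShuffle k n)⁻¹, inv_mem stdShuffle_mem, rfl⟩

end vals

end ShuffleLemma


namespace ShuffleLemma
section fix

variable {k n : ℕ}

lemma last_split (hk : 0 < k) (hn : 0 < n) : k*n - 1 = (n-1) + (k-1)*n := by
  have h3 : (k-1)*n = k*n - n := by rw [Nat.sub_mul, one_mul]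
  have h4 : n ≤ k*n := Nat.le_mul_of_pos_left n hk
  omega

lemma div_last (hk : 0 < k) (hn : 0 < n) : (k*n - 1)/n = k - 1 := by
  rw [last_split hk hn, Nat.add_mul_div_right _ _ hn, Nat.div_eq_of_lt (by omega), Nat.zero_add]

lemma mod_last (hk : 0 < k) (hn : 0 < n) : (k*n - 1)%n = n - 1 := by
  rw [last_split hk hn, Nat.add_mul_mod_self_right, Nat.mod_eq_of_lt (by omega)]

lemma fixes_last (hk : 0 < k) (hn : 0 < n) {g : Equiv.Perm (Fin (k*n))}
    (hg : g ∈ stabSubgroup k n) :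
    g ⟨k*n-1, by have := Nat.mul_pos hk hn; omega⟩
      = ⟨k*n-1, by have := Nat.mul_pos hk hn; omega⟩ := by
  have hkn : 0 < k*n := Nat.mul_pos hk hn
  set L : Fin (k*n) := ⟨k*n-1, by omega⟩ with hL
  induction hg using Subgroup.closure_induction with
  | mem g hgen =>
      rcases hgen with h | ⟨τ, hτ, rfl⟩
      · rcases h with rfl
        apply Fin.ext
        rw [stdShuffle_val]
        show (k*n-1)/n + k * ((k*n-1)%n) = k*n-1
        rw [div_last hk hn, mod_last hk hn]
        have h3 : k*(n-1) = k*n - k*1 := by rw [Nat.mul_sub]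
        have h4 : k*1 ≤ k*n := Nat.mul_le_mul_left k hn
        omega
      · apply Fin.ext
        rw [pilePerm_val]
        have hdiv : (Fin.divNat L : Fin k) = ⟨k-1, by omega⟩ := by
          apply Fin.ext
          show (k*n-1)/n = k-1
          exact div_last hk hn
        rw [hdiv, hτ (by omega)]
        show (k*n-1)%n + n * (k-1) = k*n-1
        rw [mod_last hk hn]
        have h3 : n*(k-1) = n*k - n*1 := by rw [Nat.mul_sub]
        have h4 : n*1 ≤ n*k := Nat.mul_le_mul_left n hk
        have h5 : n*k = k*n := Nat.mul_comm n k
        omega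
  | one => rfl
  | mul a b _ _ iha ihb => show a (b L) = L; rw [ihb, iha]
  | inv a _ iha =>
      have h2 : a⁻¹ (a L) = a⁻¹ L := congrArg (fun z => a⁻¹ z) iha
      simpa using h2.symm

lemma rch_lt {x y : Fin (k*n)} (hk : 0 < k) (hn : 0 < n) (h : Rch k n x y)
    (hx : (x:ℕ) + 1 < k*n) : (y:ℕ) + 1 < k*n := by
  have hkn : 0 < k*n := Nat.mul_pos hk hn
  obtain ⟨g, hg, rfl⟩ := h
  have hy2 : (g x : Fin (k*n)).val < k*n := (g x).isLt
  rcases Nat.lt_or_ge ((g x : Fin (k*n)) : ℕ) (k*n - 1) with h1 | h1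
  · omega
  · exfalso
    have hv : ((g x : Fin (k*n)) : ℕ) = k*n - 1 := by omega
    have he : (g x : Fin (k*n)) = ⟨k*n-1, by omega⟩ := Fin.ext hv
    have hfix := fixes_last hk hn hg (g := g)
    have hx' : x = ⟨k*n-1, by omega⟩ := g.injective (he.trans hfix.symm)
    have hx2 : (x:ℕ) = k*n-1 := by rw [hx']
    omega

end fix
end ShuffleLemma


namespace ShuffleLemma
section digits

variable {k t s : ℕ}

lemma dgt_lt (hk : 0 < k) (i x : ℕ) : dgt k t i x < k := Nat.mod_lt _ hk

lemma divt_lt (ht : 0 < t) {x : ℕ} (hx : x < k * (k^s*t)) : x/t < k^(s+1) := by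
  apply Nat.div_lt_of_lt_mul
  calc x < k * (k^s*t) := hx
    _ = t * k^(s+1) := by ring

/-- `y = σ⁻¹ x` at the level of values: digits of `y` are shifted-down digits of `x`. -/
lemma shiftB_dg (hk : 0 < k) (ht : 0 < t) {x y : ℕ}
    (hy : y = x/k + x%k*(k^s*t)) {j : ℕ} (hj : j < s) :
    dgt k t j y = dgt k t (j+1) x := by
  have hkj : 0 < k^j := Nat.pow_pos hk
  have hyt : y/t = x/t/k + x%k*k^s := by
    rw [hy]
    have h1 : x/k + x%k*(k^s*t) = x/k + (x%k*k^s)*t := by ring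
    rw [h1, Nat.add_mul_div_right _ _ ht]
    congr 1
    rw [Nat.div_div_eq_div_mul, Nat.div_div_eq_div_mul, Nat.mul_comm]
  obtain ⟨m, hm⟩ : ∃ m, s = j + (m + 1) := ⟨s - j - 1, by omega⟩
  show y/t/k^j % k = dgt k t (j+1) x
  rw [hyt, hm]
  have h2 : x/t/k + x%k*k^(j+(m+1)) = x/t/k + (x%k*k^m*k)*k^j := by ring
  rw [h2, Nat.add_mul_div_right _ _ hkj, Nat.add_mul_mod_self_right]
  show x/t/k/k^j % k = dgt k t (j+1) x
  rw [Nat.div_div_eq_div_mul, ← pow_succ']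
  rfl

lemma shiftB_dg_top (hk : 0 < k) (ht : 0 < t) {x y : ℕ} (hx : x < k * (k^s*t))
    (hy : y = x/k + x%k*(k^s*t)) :
    dgt k t s y = x % k := by
  have hks : 0 < k^s := Nat.pow_pos hk
  have hyt : y/t = x/t/k + x%k*k^s := by
    rw [hy]
    have h1 : x/k + x%k*(k^s*t) = x/k + (x%k*k^s)*t := by ring
    rw [h1, Nat.add_mul_div_right _ _ ht]
    congr 1
    rw [Nat.div_div_eq_div_mul, Nat.div_div_eq_div_mul, Nat.mul_comm]
  show y/t/k^s % k = x % k
  rw [hyt, Nat.add_mul_div_right _ _ hks, Nat.div_div_eq_div_mul, ← pow_succ']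
  rw [Nat.div_eq_of_lt (divt_lt ht hx), Nat.zero_add]
  exact Nat.mod_eq_of_lt (Nat.mod_lt _ hk)

lemma shiftB_lt (hk : 0 < k) (ht : 0 < t) {x : ℕ} (hx : x < k * (k^s*t)) :
    x/k + x%k*(k^s*t) < k * (k^s*t) := by
  set n := k^s*t with hn
  have hn0 : 0 < n := Nat.mul_pos (Nat.pow_pos hk) ht
  have h1 : x/k < n := Nat.div_lt_of_lt_mul (by rw [Nat.mul_comm] at hx ⊢; exact hx)
  have h2 : x%k ≤ k-1 := by have := Nat.mod_lt x hk; omega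
  have h3 : x%k*n ≤ (k-1)*n := Nat.mul_le_mul_right n h2
  have h4 := last_split hk hn0
  omega

lemma shiftB_T (hk : 0 < k) (ht : 0 < t) {x y : ℕ} (hx : x < k * (k^s*t))
    (hy : y = x/k + x%k*(k^s*t)) :
    Tcount k t s y + (if dgt k t 0 x = k-1 then 1 else 0)
      = Tcount k t s x + (if x%k = k-1 then 1 else 0) := by
  rw [Tcount_eq_sum, Tcount_eq_sum, Finset.sum_range_succ, Finset.sum_range_succ']
  have h1 : ∀ i ∈ Finset.range s,
      (if dgt k t i y = k-1 then 1 else 0) = (if dgt k t (i+1) x = k-1 then (1:ℕ) else 0) := by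
    intro i hi
    rw [shiftB_dg hk ht hy (Finset.mem_range.mp hi)]
  rw [Finset.sum_congr rfl h1, shiftB_dg_top hk ht hx hy]
  ring

lemma modk_via (hk : 0 < k) (ht : 0 < t) (z : ℕ) :
    z % k = ((z/t % k)*t + z%t) % k := by
  have h1 : z = k*(t*(z/t/k)) + ((z/t%k)*t + z%t) := by
    calc z = t*(z/t) + z%t := by rw [Nat.div_add_mod]
      _ = t*(k*(z/t/k) + z/t%k) + z%t := by
            have h0 : z/t = k*(z/t/k) + z/t%k := (Nat.div_add_mod _ _).symm
            rw [← h0]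
      _ = k*(t*(z/t/k)) + ((z/t%k)*t + z%t) := by ring
  conv_lhs => rw [h1]
  rw [Nat.mul_add_mod]

end digits
end ShuffleLemma


namespace ShuffleLemma
section replace

variable {k t s : ℕ}

lemma digA (hk : 0 < k) {c v : ℕ} (d i : ℕ) (hc : c < k^i) (hv : v < k) :
    (c + v*k^i + d*k^(i+1))/k^i % k = v := by
  have hki : 0 < k^i := Nat.pow_pos hk
  have h1 : c + v*k^i + d*k^(i+1) = c + (v + d*k)*k^i := by ring
  rw [h1, Nat.add_mul_div_right _ _ hki, Nat.div_eq_of_lt hc, Nat.zero_add,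
    Nat.add_mul_mod_self_right, Nat.mod_eq_of_lt hv]

lemma digB (hk : 0 < k) {c v d i j : ℕ} (hj : j < i) :
    (c + v*k^i + d*k^(i+1))/k^j % k = c/k^j % k := by
  have hkj : 0 < k^j := Nat.pow_pos hk
  obtain ⟨m, rfl⟩ : ∃ m, i = j + (m+1) := ⟨i - j - 1, by omega⟩
  have h1 : c + v*k^(j+(m+1)) + d*k^(j+(m+1)+1) = c + ((v*k^m + d*k^(m+1))*k)*k^j := by ring
  rw [h1, Nat.add_mul_div_right _ _ hkj, Nat.add_mul_mod_self_right]

lemma digC (hk : 0 < k) {c v d i j : ℕ} (hc : c < k^i) (hv : v < k) (hj : i < j) :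
    (c + v*k^i + d*k^(i+1))/k^j % k = d/k^(j-i-1) % k := by
  have hki : 0 < k^(i+1) := Nat.pow_pos hk
  obtain ⟨m, rfl⟩ : ∃ m, j = (i+1) + m := ⟨j - i - 1, by omega⟩
  have hsm : (i+1) + m - i - 1 = m := by omega
  have h1 : c + v*k^i + d*k^(i+1) = (c + v*k^i) + d*k^(i+1) := by ring
  have h2 : c + v*k^i < k^(i+1) := by
    have hv' : v ≤ k-1 := by omega
    have : v*k^i ≤ (k-1)*k^i := Nat.mul_le_mul_right _ hv'
    have h3 : k^(i+1) = k^i + (k-1)*k^i := by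
      have e1 : k^(i+1) = k*k^i := by rw [pow_succ']
      have e2 : (k-1)*k^i = k*k^i - 1*k^i := by rw [Nat.sub_mul]
      have e3 : 1*k^i ≤ k*k^i := Nat.mul_le_mul_right _ hk
      omega
    omega
  rw [hsm, h1]
  have h4 : ((c + v*k^i) + d*k^(i+1))/k^((i+1)+m) = d/k^m := by
    have e4 : k^((i+1)+m) = k^(i+1) * k^m := pow_add k (i+1) m
    rw [e4, ← Nat.div_div_eq_div_mul, Nat.add_mul_div_right _ _ hki,
      Nat.div_eq_of_lt h2, Nat.zero_add]
  rw [h4]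

lemma digit_replace (hk : 0 < k) {Q Q' a b i : ℕ} (ha : Q/k^i % k = a) (hb : b < k)
    (heq : Q' + a * k^i = Q + b * k^i) :
    Q'/k^i % k = b ∧ ∀ j, j ≠ i → Q'/k^j % k = Q/k^j % k := by
  have hki : 0 < k^i := Nat.pow_pos hk
  have ha' : a < k := by rw [← ha]; exact Nat.mod_lt _ hk
  set c := Q % k^i with hc
  set d := Q/k^i/k with hd
  have hclt : c < k^i := Nat.mod_lt _ hki
  have hQ : Q = c + a*k^i + d*k^(i+1) := by
    have h1 : Q = k^i*(Q/k^i) + c := by rw [hc, Nat.div_add_mod]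
    have h2 : Q/k^i = k*d + a := by rw [hd, ← ha, Nat.div_add_mod]
    rw [h1, h2]; ring
  have hQ' : Q' = c + b*k^i + d*k^(i+1) := by
    have h3 : Q + b*k^i = (c + b*k^i + d*k^(i+1)) + a*k^i := by rw [hQ]; ring
    have h4 := heq.trans h3
    exact Nat.add_right_cancel h4
  constructor
  · rw [hQ']; exact digA hk d i hclt hb
  · intro j hj
    rcases Nat.lt_or_ge j i with h | h
    · rw [hQ, hQ', digB hk h, digB hk h]
    · have h' : i < j := by omega
      rw [hQ, hQ', digC hk hclt hb h', digC hk hclt ha' h']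

lemma edit_dg (hk : 0 < k) (ht : 0 < t) {x y a b i : ℕ}
    (ha : dgt k t i x = a) (hb : b < k)
    (heq : y + a*(k^i*t) = x + b*(k^i*t)) :
    y % t = x % t ∧ dgt k t i y = b ∧ ∀ j, j ≠ i → dgt k t j y = dgt k t j x := by
  have hmod : y % t = x % t := by
    have h1 : (y + (a*k^i)*t) % t = (x + (b*k^i)*t) % t := by
      rw [show (a*k^i)*t = a*(k^i*t) by ring, show (b*k^i)*t = b*(k^i*t) by ring, heq]
    rwa [Nat.add_mul_mod_self_right, Nat.add_mul_mod_self_right] at h1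
  have hdiv : y/t + a*k^i = x/t + b*k^i := by
    have h1 : (y + (a*k^i)*t) / t = (x + (b*k^i)*t) / t := by
      rw [show (a*k^i)*t = a*(k^i*t) by ring, show (b*k^i)*t = b*(k^i*t) by ring, heq]
    rwa [Nat.add_mul_div_right _ _ ht, Nat.add_mul_div_right _ _ ht] at h1
  obtain ⟨h2, h3⟩ := digit_replace hk (ha : x/t/k^i % k = a) hb hdiv
  exact ⟨hmod, h2, h3⟩

lemma edit_T (hk : 0 < k) (ht : 0 < t) {x y a b i : ℕ}
    (ha : dgt k t i x = a) (hb : b < k) (hi : i ≤ s)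
    (hak : a ≠ k-1) (hbk : b ≠ k-1)
    (heq : y + a*(k^i*t) = x + b*(k^i*t)) :
    Tcount k t s y = Tcount k t s x := by
  obtain ⟨_, h2, h3⟩ := edit_dg hk ht ha hb heq
  rw [Tcount_eq_sum, Tcount_eq_sum]
  apply Finset.sum_congr rfl
  intro j _
  by_cases hji : j = i
  · subst hji
    rw [h2, ha, if_neg hbk, if_neg hak]
  · rw [h3 j hji]

lemma choose_v (hk : 3 ≤ k) (hkt : ¬ k ∣ t) (r : ℕ) :
    ∃ v, v ≤ k-2 ∧ (v*t + r) % k ≠ k-1 := by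
  by_cases h0 : r % k = k-1
  · refine ⟨1, by omega, ?_⟩
    intro hc
    apply hkt
    rw [one_mul] at hc
    have hr : r ≡ k-1 [MOD k] := by
      show r % k = (k-1) % k
      rw [h0, Nat.mod_eq_of_lt (by omega)]
    have hc' : t + r ≡ 0 + (k-1) [MOD k] := by
      show (t+r) % k = (0 + (k-1)) % k
      rw [hc, Nat.zero_add, Nat.mod_eq_of_lt (by omega)]
    have ht2 : t + (k-1) ≡ 0 + (k-1) [MOD k] :=
      ((hr.add_left t).symm.trans hc' : _)
    have := Nat.ModEq.add_right_cancel' (k-1) ht2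
    exact (Nat.modEq_zero_iff_dvd).mp this
  · exact ⟨0, by omega, by simpa using h0⟩

end replace
end ShuffleLemma


namespace ShuffleLemma
section editfin

variable {k s t n : ℕ}

lemma div_n_eq_dgt (hk : 0 < k) (ht : 0 < t) (hn : n = k^s*t) {x : ℕ} (hx : x < k*n) :
    x / n = dgt k t s x := by
  have h1 : x/t < k^(s+1) := divt_lt ht (by rw [← hn]; exact hx)
  have h2 : x/t/k^s < k := by
    apply Nat.div_lt_of_lt_mul
    calc x/t < k^(s+1) := h1
      _ = k^s * k := pow_succ k s
  show x/n = x/t/k^s % k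
  rw [Nat.mod_eq_of_lt h2, hn, Nat.div_div_eq_div_mul, Nat.mul_comm t (k^s),
    ← Nat.div_div_eq_div_mul]

lemma edit_exists (hk : 3 ≤ k) (ht : 0 < t) (hn : n = k^s*t) :
    ∀ j i, i + j = s → ∀ x : Fin (k*n), ∀ v, v ≤ k-2 → dgt k t i (x:ℕ) ≠ k-1 →
    ∃ y : Fin (k*n), Rch k n x y ∧
      (y:ℕ) + (dgt k t i (x:ℕ))*(k^i*t) = (x:ℕ) + v*(k^i*t) := by
  have hk0 : 0 < k := by omega
  intro j
  induction j with
  | zero =>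
    intro i hi x v hv hd
    have his : i = s := by omega
    subst his
    have hxlt : (x:ℕ) < k*n := x.isLt
    have halt : dgt k t i (x:ℕ) < k := dgt_lt hk0 _ _
    have hvlt : v < k := by omega
    set a := dgt k t i (x:ℕ) with ha
    let τ : Equiv.Perm (Fin k) := Equiv.swap ⟨a, halt⟩ ⟨v, hvlt⟩
    have hτ : ∀ h : k-1 < k, τ ⟨k-1,h⟩ = ⟨k-1,h⟩ := by
      intro h
      apply Equiv.swap_apply_of_ne_of_ne
      · exact Fin.ne_of_val_ne (fun hcon => hd hcon.symm)
      · exact Fin.ne_of_val_ne (show k-1 ≠ v by omega)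
    refine ⟨pilePerm k n τ x, ⟨pilePerm k n τ, pilePerm_mem hτ, rfl⟩, ?_⟩
    rw [pilePerm_val]
    have hdn' : (Fin.divNat x : Fin k) = ⟨a, halt⟩ :=
      Fin.ext (div_n_eq_dgt hk0 ht hn hxlt)
    rw [hdn', Equiv.swap_apply_left]
    show (x:ℕ)%n + n*v + a*(k^i*t) = (x:ℕ) + v*(k^i*t)
    have hxd : n*a + (x:ℕ)%n = (x:ℕ) := by
      have h2 := Nat.div_add_mod (x:ℕ) n
      rw [div_n_eq_dgt hk0 ht hn hxlt] at h2
      exact h2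
    calc (x:ℕ)%n + n*v + a*(k^i*t)
        = (n*a + (x:ℕ)%n) + v*(k^i*t) := by rw [← hn]; ring
      _ = (x:ℕ) + v*(k^i*t) := by rw [hxd]
  | succ j ih =>
    intro i hi x v hv hd
    set x' := stdShuffle k n x with hx'
    have hBv : ((x':ℕ))/k + n*((x':ℕ)%k) = (x:ℕ) := by
      have h1 := stdShuffle_inv_val (k:=k) (n:=n) x'
      have h2 : (stdShuffle k n)⁻¹ x' = x := Equiv.symm_apply_apply _ _
      rw [h2] at h1
      exact h1.symm
    have hyform : (x:ℕ) = (x':ℕ)/k + (x':ℕ)%k*(k^s*t) := by rw [← hn, ← hBv]; ring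
    have hdg : dgt k t i (x:ℕ) = dgt k t (i+1) (x':ℕ) :=
      shiftB_dg hk0 ht hyform (by omega : i < s)
    obtain ⟨y', hrch', heq'⟩ := ih (i+1) (by omega) x' v hv (by rw [← hdg]; exact hd)
    refine ⟨(stdShuffle k n)⁻¹ y', ?_, ?_⟩
    · have r1 : Rch k n x x' := ⟨stdShuffle k n, stdShuffle_mem, rfl⟩
      exact (r1.trans hrch').trans (Rch.shuffle_inv y')
    · have hyv : (((stdShuffle k n)⁻¹ y' : Fin (k*n)) : ℕ)
          = (y':ℕ)/k + n*((y':ℕ)%k) := stdShuffle_inv_val y'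
      have key : ∀ z c : ℕ, (z + c*(k^(i+1)*t))/k + n*((z + c*(k^(i+1)*t))%k)
          = (z/k + n*(z%k)) + c*(k^i*t) := by
        intro z c
        have h1 : z + c*(k^(i+1)*t) = z + (c*(k^i*t))*k := by ring
        rw [h1, Nat.add_mul_div_right _ _ hk0, Nat.add_mul_mod_self_right]
        ring
      have e1 := congrArg (fun z => z/k + n*(z%k)) heq'
      rw [key _ (dgt k t (i+1) (x':ℕ)), key _ v, hBv] at e1
      rw [hyv, hdg]
      exact e1

end editfin
end ShuffleLemma


namespace ShuffleLemma
section march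

variable {k s t n : ℕ}

lemma march (hk : 3 ≤ k) (ht : 2 ≤ t) (hkt : ¬ k ∣ t) (hn : n = k^s*t) :
    ∀ p, ∀ x : Fin (k*n), 1 ≤ p → p ≤ s → (x:ℕ)+1 < k*n →
    dgt k t p (x:ℕ) = k-1 → (∀ j, j < p → dgt k t j (x:ℕ) ≠ k-1) →
    ∃ y : Fin (k*n), Rch k n x y ∧ dgt k t 0 (y:ℕ) = 0 ∧ dgt k t 1 (y:ℕ) = k-1 ∧
      Tcount k t s (y:ℕ) = Tcount k t s (x:ℕ) := by
  have hk0 : 0 < k := by omega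
  have ht0 : 0 < t := by omega
  have hn0 : 0 < n := by
    rw [hn]; exact Nat.mul_pos (Nat.pow_pos hk0) ht0
  intro p
  induction p using Nat.strong_induction_on with
  | _ p ih =>
    intro x hp1 hps hx hdp hbelow
    have hd0 : dgt k t 0 (x:ℕ) ≠ k-1 := hbelow 0 (by omega)
    by_cases hp : p = 1
    · subst hp
      obtain ⟨y, hrch, heq⟩ := edit_exists hk ht0 hn s 0 (by omega) x 0 (by omega) hd0
      obtain ⟨hmod, hdy0, hdyj⟩ := edit_dg hk0 ht0 rfl (show (0:ℕ) < k by omega) heq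
      refine ⟨y, hrch, hdy0, ?_, ?_⟩
      · rw [hdyj 1 (by omega)]; exact hdp
      · exact edit_T hk0 ht0 rfl (by omega) (by omega : 0 ≤ s) hd0
          (show (0:ℕ) ≠ k-1 by omega) heq
    · -- march step
      obtain ⟨v, hv, hvmod⟩ := choose_v hk hkt ((x:ℕ)%t)
      obtain ⟨y₁, hrch1, heq1⟩ := edit_exists hk ht0 hn s 0 (by omega) x v hv hd0
      have hvk : v < k := by omega
      have hvne : v ≠ k-1 := by omega
      obtain ⟨hmod1, hdg0y, hdgjy⟩ := edit_dg hk0 ht0 rfl hvk heq1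
      have hT1 : Tcount k t s (y₁:ℕ) = Tcount k t s (x:ℕ) :=
        edit_T hk0 ht0 rfl hvk (by omega) hd0 hvne heq1
      have hy1k : (y₁:ℕ) % k ≠ k-1 := by
        rw [modk_via hk0 ht0]
        have hdgt0 : dgt k t 0 (y₁:ℕ) = (y₁:ℕ)/t % k := by simp [dgt]
        rw [← hdgt0, hdg0y, hmod1]
        exact hvmod
      set x₂ := (stdShuffle k n)⁻¹ y₁ with hx₂
      have hx₂v : (x₂:ℕ) = (y₁:ℕ)/k + (y₁:ℕ)%k*(k^s*t) := by
        rw [hx₂, stdShuffle_inv_val, ← hn]; ring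
      have hy₁lt : (y₁:ℕ) < k*(k^s*t) := by rw [← hn]; exact y₁.isLt
      have hsh : ∀ j, j < s → dgt k t j (x₂:ℕ) = dgt k t (j+1) (y₁:ℕ) :=
        fun j hj => shiftB_dg hk0 ht0 hx₂v hj
      have hT2eq := shiftB_T hk0 ht0 hy₁lt hx₂v
      rw [hdg0y, if_neg hvne, if_neg hy1k] at hT2eq
      have hrch2 : Rch k n x x₂ := hrch1.trans (Rch.shuffle_inv y₁)
      have hx₂lt : (x₂:ℕ)+1 < k*n := rch_lt hk0 hn0 hrch2 hx
      have hdgp : dgt k t (p-1) (x₂:ℕ) = k-1 := by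
        rw [hsh (p-1) (by omega), show (p-1)+1 = p by omega, hdgjy p (by omega)]
        exact hdp
      have hbel : ∀ j, j < p-1 → dgt k t j (x₂:ℕ) ≠ k-1 := by
        intro j hj
        rw [hsh j (by omega), hdgjy (j+1) (by omega)]
        exact hbelow (j+1) (by omega)
      obtain ⟨y, hrchy, hy0, hy1, hyT⟩ :=
        ih (p-1) (by omega) x₂ (by omega) (by omega) hx₂lt hdgp hbel
      exact ⟨y, hrch2.trans hrchy, hy0, hy1, by omega⟩

end march
end ShuffleLemma


namespace ShuffleLemma
section final

variable {k s t n : ℕ}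

lemma exists_digit_eq (hT1 : 1 ≤ Tcount k t s x) :
    ∃ i, i ≤ s ∧ dgt k t i x = k-1 := by
  have h1 : 0 < ((Finset.range (s+1)).filter
      fun i => x / t / k ^ i % k = k - 1).card := hT1
  obtain ⟨i, hi⟩ := Finset.card_pos.mp h1
  obtain ⟨hir, hip⟩ := Finset.mem_filter.mp hi
  exact ⟨i, by have := Finset.mem_range.mp hir; omega, hip⟩

lemma finish_case (hk : 3 ≤ k) (ht : 2 ≤ t) (hkt : ¬ k ∣ t) (hn : n = k^s*t)
    (x : Fin (k*n)) (hx : (x:ℕ)+1 < k*n) (hd0 : dgt k t 0 (x:ℕ) ≠ k-1)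
    (hT1 : 1 ≤ Tcount k t s (x:ℕ)) :
    ∃ y : Fin (k*n), Rch k n x y ∧ (Tcount k t s (y:ℕ) = 0 ∨
      (dgt k t 0 (y:ℕ) = 0 ∧ dgt k t 1 (y:ℕ) = k-1 ∧
        Tcount k t s (y:ℕ) ≤ Tcount k t s (x:ℕ))) := by
  obtain ⟨i, his, hieq⟩ := exists_digit_eq hT1
  have hEx : ∃ j, dgt k t j (x:ℕ) = k-1 := ⟨i, hieq⟩
  set p := Nat.find hEx with hpdef
  have hp := Nat.find_spec hEx
  have hple : p ≤ i := Nat.find_min' hEx hieq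
  have hmin : ∀ j, j < p → dgt k t j (x:ℕ) ≠ k-1 := fun j hj => Nat.find_min hEx hj
  have hp' : dgt k t p (x:ℕ) = k-1 := by rw [hpdef]; exact hp
  have hp1 : 1 ≤ p := by
    by_contra hc
    have hp0 : p = 0 := by omega
    rw [hp0] at hp'
    exact hd0 hp'
  obtain ⟨y, hrch, hy0, hy1, hyT⟩ :=
    march hk ht hkt hn p x hp1 (by omega) hx hp' hmin
  exact ⟨y, hrch, Or.inr ⟨hy0, hy1, le_of_eq hyT⟩⟩

lemma main_aux (hk : 3 ≤ k) (ht : 2 ≤ t) (hkt : ¬ k ∣ t) (hn : n = k^s*t) :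
    ∀ m, ∀ x : Fin (k*n), m ≤ s → dgt k t m (x:ℕ) ≠ k-1 → (x:ℕ)+1 < k*n →
    1 ≤ Tcount k t s (x:ℕ) → Tcount k t s (x:ℕ) ≤ s →
    ∃ y : Fin (k*n), Rch k n x y ∧ (Tcount k t s (y:ℕ) = 0 ∨
      (dgt k t 0 (y:ℕ) = 0 ∧ dgt k t 1 (y:ℕ) = k-1 ∧
        Tcount k t s (y:ℕ) ≤ Tcount k t s (x:ℕ))) := by
  have hk0 : 0 < k := by omega
  have ht0 : 0 < t := by omega
  have hn0 : 0 < n := by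
    rw [hn]; exact Nat.mul_pos (Nat.pow_pos hk0) ht0
  intro m
  induction m with
  | zero =>
    intro x _ hd0 hx hT1 hT2
    exact finish_case hk ht hkt hn x hx hd0 hT1
  | succ m ih =>
    intro x hms hdm hx hT1 hT2
    by_cases hd0 : dgt k t 0 (x:ℕ) = k-1
    · -- consume step
      set x₂ := (stdShuffle k n)⁻¹ x with hx₂
      have hx₂v : (x₂:ℕ) = (x:ℕ)/k + (x:ℕ)%k*(k^s*t) := by
        rw [hx₂, stdShuffle_inv_val, ← hn]; ring
      have hxlt : (x:ℕ) < k*(k^s*t) := by rw [← hn]; exact x.isLt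
      have hsh : ∀ j, j < s → dgt k t j (x₂:ℕ) = dgt k t (j+1) (x:ℕ) :=
        fun j hj => shiftB_dg hk0 ht0 hx₂v hj
      have hTeq := shiftB_T hk0 ht0 hxlt hx₂v
      rw [if_pos hd0] at hTeq
      have hT2le : Tcount k t s (x₂:ℕ) ≤ Tcount k t s (x:ℕ) := by
        by_cases hmk : (x:ℕ)%k = k-1
        · rw [if_pos hmk] at hTeq; omega
        · rw [if_neg hmk] at hTeq; omega
      have hrch2 : Rch k n x x₂ := Rch.shuffle_inv x
      by_cases hT0 : Tcount k t s (x₂:ℕ) = 0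
      · exact ⟨x₂, hrch2, Or.inl hT0⟩
      · have hx₂lt : (x₂:ℕ)+1 < k*n := rch_lt hk0 hn0 hrch2 hx
        have hdm2 : dgt k t m (x₂:ℕ) ≠ k-1 := by
          rw [hsh m (by omega)]; exact hdm
        obtain ⟨y, hrchy, hdisj⟩ := ih x₂ (by omega) hdm2 hx₂lt (by omega) (by omega)
        refine ⟨y, hrch2.trans hrchy, ?_⟩
        rcases hdisj with h | ⟨h0, h1, hle⟩
        · exact Or.inl h
        · exact Or.inr ⟨h0, h1, by omega⟩
    · exact finish_case hk ht hkt hn x hx hd0 hT1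

end final
end ShuffleLemma


/-- Let `k ≥ 3`, `n = k^s * t` with `s ≥ 1`, `t ≥ 2` and `k ∤ t`, and let
`x ∈ {0,…,kn-2}` satisfy `1 ≤ T(x) ≤ s`. Then there exists `y` in the `H`-orbit of
`x` such that either `T(y) = 0`, or the base-`k` digits of `⌊y/t⌋` satisfy `y₀ = 0`
and `y₁ = k - 1` and `T(y) ≤ T(x)`. -/
theorem exists_orbit_elt_digits (k s t n : ℕ) (hk : 3 ≤ k) (hs : 1 ≤ s)
    (ht : 2 ≤ t) (hkt : ¬ k ∣ t) (hn : n = k ^ s * t)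
    (x : Fin (k * n)) (hx : (x : ℕ) + 1 < k * n)
    (hT1 : 1 ≤ Tcount k t s (x : ℕ)) (hT2 : Tcount k t s (x : ℕ) ≤ s) :
    ∃ y : Fin (k * n), (∃ g ∈ stabSubgroup k n, g x = y) ∧
      (Tcount k t s (y : ℕ) = 0 ∨
        ((y : ℕ) / t % k = 0 ∧ (y : ℕ) / t / k % k = k - 1 ∧
          Tcount k t s (y : ℕ) ≤ Tcount k t s (x : ℕ))) := by
  classical
  obtain ⟨m, hms, hm⟩ : ∃ m, m ≤ s ∧ ShuffleLemma.dgt k t m (x:ℕ) ≠ k-1 := by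
    by_contra hcon
    push_neg at hcon
    have hall : ∀ i ∈ Finset.range (s+1), (x:ℕ)/t/k^i % k = k-1 := by
      intro i hi
      exact hcon i (by have := Finset.mem_range.mp hi; omega)
    have : Tcount k t s (x:ℕ) = s+1 := by
      rw [Tcount, Finset.filter_true_of_mem hall, Finset.card_range]
    omega
  obtain ⟨y, hrch, hdisj⟩ :=
    ShuffleLemma.main_aux hk ht hkt hn m x hms hm hx hT1 hT2
  refine ⟨y, hrch, ?_⟩
  rcases hdisj with h | ⟨h0, h1, hle⟩
  · exact Or.inl h
  · refine Or.inr ⟨?_, ?_, hle⟩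
    · have : ShuffleLemma.dgt k t 0 (y:ℕ) = (y:ℕ)/t % k := by
        simp [ShuffleLemma.dgt]
      rw [← this]; exact h0
    · have : ShuffleLemma.dgt k t 1 (y:ℕ) = (y:ℕ)/t/k % k := by
        simp [ShuffleLemma.dgt]
      rw [← this]; exact h1
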